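/- Let d ≥ 2, 0 < μ < 1, and 0 < α < 2/(d(1+μ)−2). Then there exist real numbers θ, θ̃ > 1, υ, υ̃ ∈ [0,1], and β_0 ∈ [1, d(1+μ)/(d(1+μ)−2)) such that, setting r = (d(θ−1)+2)/2, r̃ = (d(θ̃−1)+2)/2, p = θβ_0/(α(θ+υ−θυ)), and p̃ = θ̃β_0/(α(θ̃+υ̃−θ̃υ̃)), one has p > d, p̃ > d/2, and ((2+2μ)·r·υ·α)/((1−μ)·θ·β_0) + ((2+2μ)·r̃·υ̃·α)/((1−μ)·θ̃·β_0) < 1. -/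

import Mathlib

set_option maxHeartbeats 1000000 in
theorem stmt_19 (d : ℕ) (hd : 2 ≤ d) (μ α : ℝ) (hμ0 : 0 < μ) (hμ1 : μ < 1)
    (hden : 0 < d * (1 + μ) - 2)
    (hα0 : 0 < α) (hα : α < 2 / (d * (1 + μ) - 2)) :
    ∃ θ θt υ υt β₀ : ℝ, 1 < θ ∧ 1 < θt ∧ 0 ≤ υ ∧ υ ≤ 1 ∧ 0 ≤ υt ∧ υt ≤ 1 ∧
      1 ≤ β₀ ∧ β₀ < d * (1 + μ) / (d * (1 + μ) - 2) ∧
      (d : ℝ) < θ * β₀ / (α * (θ + υ - θ * υ)) ∧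
      (d : ℝ) / 2 < θt * β₀ / (α * (θt + υt - θt * υt)) ∧
      ((2 + 2 * μ) * ((d * (θ - 1) + 2) / 2) * υ * α) / ((1 - μ) * θ * β₀) +
        ((2 + 2 * μ) * ((d * (θt - 1) + 2) / 2) * υt * α) / ((1 - μ) * θt * β₀) < 1 := by
  have hd2 : (2:ℝ) ≤ (d:ℝ) := by exact_mod_cast hd
  have hd0 : (0:ℝ) < (d:ℝ) := by linarith only [hd2]
  have hμm : (0:ℝ) < 1 - μ := by linarith only [hμ1]
  obtain ⟨x, hxdef⟩ : ∃ x : ℝ, x = (d:ℝ) * α := ⟨_, rfl⟩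
  have hx0 : 0 < x := by rw [hxdef]; positivity
  obtain ⟨B, hBdef⟩ : ∃ B : ℝ, B = (d:ℝ) * (1 + μ) / ((d:ℝ) * (1 + μ) - 2) := ⟨_, rfl⟩
  have hB1 : 1 < B := by
    rw [hBdef, lt_div_iff₀ hden]; linarith only []
  have hB0 : 0 < B := by linarith only [hB1]
  have hαD : α * ((d:ℝ) * (1 + μ) - 2) < 2 := by
    have h := (lt_div_iff₀ hden).mp hα; linarith only [h]
  have hxB : x * (1 + μ) < 2 * B := by
    have hpos : (0:ℝ) < (d:ℝ) * (1 + μ) := by positivity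
    have h1 : ((d:ℝ) * (1 + μ)) * (α * ((d:ℝ) * (1 + μ) - 2)) <
        ((d:ℝ) * (1 + μ)) * 2 := by
      exact mul_lt_mul_of_pos_left hαD hpos
    rw [hxdef, hBdef,
      show (2:ℝ) * ((d:ℝ) * (1 + μ) / ((d:ℝ) * (1 + μ) - 2)) =
        2 * ((d:ℝ) * (1 + μ)) / ((d:ℝ) * (1 + μ) - 2) from by ring,
      lt_div_iff₀ hden]
    linarith only [h1]
  -- choose υ
  obtain ⟨L, hLdef⟩ : ∃ L : ℝ, L = max 0 (1 - B / x) := ⟨_, rfl⟩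
  obtain ⟨U, hUdef⟩ : ∃ U : ℝ, U = min 1 ((1 - μ) * B / ((1 + μ) * x)) := ⟨_, rfl⟩
  have hU0 : 0 < U := by
    rw [hUdef]; apply lt_min one_pos; positivity
  have hBxx : x * (B / x) = B := mul_div_cancel₀ _ (ne_of_gt hx0)
  have hLU : L < U := by
    rw [hLdef, hUdef]
    apply max_lt
    · rw [← hUdef]; exact hU0
    · apply lt_min
      · have h : 0 < B / x := by positivity
        linarith only [h]
      · rw [lt_div_iff₀ (by positivity : (0:ℝ) < (1 + μ) * x), sub_mul, one_mul]
        have hq : B / x * ((1 + μ) * x) = (1 + μ) * B := by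
          field_simp
        linarith only [hq, hxB]
  obtain ⟨υ, hvdef⟩ : ∃ v : ℝ, v = (L + U) / 2 := ⟨_, rfl⟩
  have hL0 : 0 ≤ L := by rw [hLdef]; exact le_max_left _ _
  have hU1 : U ≤ 1 := by rw [hUdef]; exact min_le_left _ _
  have hv0 : 0 ≤ υ := by rw [hvdef]; linarith only [hL0, hLU]
  have hv1 : υ ≤ 1 := by rw [hvdef]; linarith only [hU1, hLU]
  have hvL : L < υ := by rw [hvdef]; linarith only [hLU]
  have hvU : υ < U := by rw [hvdef]; linarith only [hLU]
  have hkey1 : x * (1 - υ) < B := by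
    have h1 : 1 - B / x < υ := by
      refine lt_of_le_of_lt ?_ hvL
      rw [hLdef]; exact le_max_right _ _
    have h2 := mul_lt_mul_of_pos_left (show 1 - υ < B / x by linarith only [h1]) hx0
    linarith only [h2, hBxx]
  have hkey2 : (1 + μ) * x * υ < (1 - μ) * B := by
    have h2 : υ < (1 - μ) * B / ((1 + μ) * x) := by
      refine lt_of_lt_of_le hvU ?_
      rw [hUdef]; exact min_le_right _ _
    have h3 := (lt_div_iff₀ (by positivity : (0:ℝ) < (1 + μ) * x)).mp h2
    linarith only [h3]
  -- choose β₀
  obtain ⟨M, hMdef⟩ : ∃ M : ℝ,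
      M = max (max 1 (x / 2)) (max (x * (1 - υ)) ((1 + μ) * x * υ / (1 - μ))) := ⟨_, rfl⟩
  have hMB : M < B := by
    have h2 : x / 2 < B := by linarith only [hxB, mul_pos hx0 hμ0]
    have h4 : (1 + μ) * x * υ / (1 - μ) < B := by
      rw [div_lt_iff₀ hμm]
      linarith only [hkey2]
    rw [hMdef]
    exact max_lt (max_lt hB1 h2) (max_lt hkey1 h4)
  obtain ⟨β₀, hbdef⟩ : ∃ b : ℝ, b = (M + B) / 2 := ⟨_, rfl⟩
  have hM1 : 1 ≤ M := by rw [hMdef]; exact le_trans (le_max_left _ _) (le_max_left _ _)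
  have hMx2 : x / 2 ≤ M := by rw [hMdef]; exact le_trans (le_max_right _ _) (le_max_left _ _)
  have hMxv : x * (1 - υ) ≤ M := by
    rw [hMdef]; exact le_trans (le_max_left _ _) (le_max_right _ _)
  have hMmu : (1 + μ) * x * υ / (1 - μ) ≤ M := by
    rw [hMdef]; exact le_trans (le_max_right _ _) (le_max_right _ _)
  have hb1 : 1 ≤ β₀ := by rw [hbdef]; linarith only [hM1, hMB]
  have hbB : β₀ < B := by rw [hbdef]; linarith only [hMB]
  have hbM : M < β₀ := by rw [hbdef]; linarith only [hMB]
  have hb0 : 0 < β₀ := by linarith only [hb1]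
  have hbxv : x * (1 - υ) < β₀ := lt_of_le_of_lt hMxv hbM
  have hbx2 : x / 2 < β₀ := lt_of_le_of_lt hMx2 hbM
  have hbmu : (1 + μ) * x * υ < (1 - μ) * β₀ := by
    have h := lt_of_le_of_lt hMmu hbM
    rw [div_lt_iff₀ hμm] at h
    linarith only [h]
  -- choose θ
  obtain ⟨δ, hδdef⟩ : ∃ z : ℝ, z = β₀ - x * (1 - υ) := ⟨_, rfl⟩
  have hδ0 : 0 < δ := by rw [hδdef]; linarith only [hbxv]
  obtain ⟨θ, hθdef⟩ : ∃ t : ℝ, t = max 2 (x * υ / δ + 1) := ⟨_, rfl⟩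
  have hθ2 : (2:ℝ) ≤ θ := by rw [hθdef]; exact le_max_left _ _
  have hθ0 : 0 < θ := by linarith only [hθ2]
  have hθδ : x * υ < θ * δ := by
    have h : x * υ / δ + 1 ≤ θ := by rw [hθdef]; exact le_max_right _ _
    have h2 := (div_lt_iff₀ hδ0).mp (show x * υ / δ < θ by linarith only [h, hδ0])
    linarith only [h2]
  refine ⟨θ, 2, υ, 0, β₀, by linarith only [hθ2], by norm_num, hv0, hv1, le_refl 0,
    by norm_num, hb1, by rw [← hBdef]; exact hbB, ?_, ?_, ?_⟩
  · -- p > d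
    have hden1 : 0 < θ + υ - θ * υ := by
      have hm := mul_nonneg (show (0:ℝ) ≤ θ - 2 by linarith only [hθ2])
        (show (0:ℝ) ≤ 1 - υ by linarith only [hv1])
      linarith only [hm, hv0, hv1]
    have hA : 0 < α * (θ + υ - θ * υ) := by positivity
    rw [lt_div_iff₀ hA]
    have key : x * (1 - υ) * θ + x * υ < θ * β₀ := by
      rw [hδdef] at hθδ; linarith only [hθδ]
    rw [hxdef] at key
    linarith only [key]
  · -- p̃ > d/2
    have hA : (0:ℝ) < α * (2 + 0 - 2 * 0) := by norm_num; positivity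
    rw [lt_div_iff₀ hA]
    rw [hxdef] at hbx2
    linarith only [hbx2]
  · -- sum < 1
    have h2 : ((2 + 2 * μ) * (((d:ℝ) * ((2:ℝ) - 1) + 2) / 2) * 0 * α) / ((1 - μ) * 2 * β₀)
        = 0 := by ring
    rw [h2, add_zero]
    have hDn : 0 < (1 - μ) * θ * β₀ := by positivity
    rw [div_lt_one hDn]
    have hfac : 0 ≤ (2 + 2 * μ) * υ * α := by positivity
    have hstep : (2 + 2 * μ) * (((d:ℝ) * (θ - 1) + 2) / 2) * υ * α
        ≤ θ * ((1 + μ) * x * υ) := by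
      rw [hxdef]
      have hm := mul_nonneg hfac (show (0:ℝ) ≤ (d:ℝ) - 2 by linarith only [hd2])
      linarith only [hm]
    have hstep2 : θ * ((1 + μ) * x * υ) < θ * ((1 - μ) * β₀) :=
      mul_lt_mul_of_pos_left hbmu hθ0
    calc (2 + 2 * μ) * (((d:ℝ) * (θ - 1) + 2) / 2) * υ * α
        ≤ θ * ((1 + μ) * x * υ) := hstep
      _ < θ * ((1 - μ) * β₀) := hstep2
      _ = (1 - μ) * θ * β₀ := by ring
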